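/- Consider the 3-cycle quiver on vertices O, B, G with arrows O→B→G→O and cluster A-coordinates (C_O, C_B, C_G), with A-mutation μ_k*(A'_k) = (∏_{ε_{kj}>0} A_j^{ε_{kj}} + ∏_{ε_{kj}<0} A_j^{−ε_{kj}})/A_k and μ_k*(A'_i) = A_i for i ≠ k. The composition μ_O μ_G μ_B μ_O maps (C_O, C_B, C_G) to ((C_O+C_B+C_G)/(C_B C_G), (C_O+C_B+C_G)/(C_O C_B), (C_O+C_B+C_G)/(C_O C_G)); consequently, after the permutation swapping the B and G coordinates, the ratios C_G/C_B, C_O/C_G, C_B/C_O are all invariant under the full cluster transformation. -/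

import Mathlib

/-- Standard mutation of a skew-symmetric exchange matrix at vertex `k`. -/
def epsMut {n : Type*} [DecidableEq n] (ε : n → n → ℤ) (k : n) : n → n → ℤ :=
  fun i j => if i = k ∨ j = k then -ε i j
    else ε i j + (|ε i k| * ε k j + ε i k * |ε k j|) / 2

/-- Cluster A-mutation at vertex `k`. -/
def aMut {F : Type*} [Field F] {n : Type*} [Fintype n] [DecidableEq n]
    (ε : n → n → ℤ) (k : n) (A : n → F) : n → F :=
  fun i => if i = k then
    ((∏ j, A j ^ (ε k j).toNat) + ∏ j, A j ^ (-(ε k j)).toNat) / A k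
  else A i

/-- One seed-mutation step on A-coordinates. -/
def aStep {F : Type*} [Field F] {n : Type*} [Fintype n] [DecidableEq n]
    (s : (n → n → ℤ) × (n → F)) (k : n) : (n → n → ℤ) × (n → F) :=
  (epsMut s.1 k, aMut s.1 k s.2)

theorem stmt10 {F : Type*} [Field F] (C : Fin 3 → F)
    (h0 : C 0 ≠ 0) (h1 : C 1 ≠ 0) (h2 : C 2 ≠ 0)
    (h3 : C 1 + C 2 ≠ 0) (h4 : C 0 + C 1 + C 2 ≠ 0) :
    let ε : Fin 3 → Fin 3 → ℤ := fun i j => !![0, 1, -1; -1, 0, 1; 1, -1, 0] i j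
    let D := (List.foldl aStep (ε, C) [0, 1, 2, 0]).2
    (D 0 = (C 0 + C 1 + C 2) / (C 1 * C 2) ∧
     D 1 = (C 0 + C 1 + C 2) / (C 0 * C 1) ∧
     D 2 = (C 0 + C 1 + C 2) / (C 0 * C 2)) ∧
    -- after swapping the B and G coordinates, the three ratios are invariant
    (D 1 / D 2 = C 2 / C 1 ∧ D 0 / D 1 = C 0 / C 2 ∧ D 2 / D 0 = C 1 / C 0) := by
  intro ε D
  have key : D 0 = (C 0 + C 1 + C 2) / (C 1 * C 2) ∧
      D 1 = (C 0 + C 1 + C 2) / (C 0 * C 1) ∧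
      D 2 = (C 0 + C 1 + C 2) / (C 0 * C 2) := by
    refine ⟨?_, ?_, ?_⟩ <;>
    · simp only [D, ε, List.foldl, aStep, aMut, epsMut, Fin.prod_univ_three]
      norm_num [Fin.ext_iff, Matrix.cons_val_zero, Matrix.cons_val_one, Matrix.head_cons, Matrix.cons_val_two, Matrix.tail_cons]
      simp only [show ((-1:ℤ)).toNat = 0 from rfl, pow_zero]
      field_simp
      ring
  obtain ⟨e0, e1, e2⟩ := key
  refine ⟨⟨e0, e1, e2⟩, ?_, ?_, ?_⟩ <;> simp only [e0, e1, e2] <;> field_simp <;> ring
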